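/- A connected graph G with at least 2 vertices has partition dimension pd(G) = 2 if and only if G is a path graph. -/

import Mathlib

open SimpleGraph

variable {V : Type*}

/-- Distance from a vertex to a set of vertices: `min_{u ∈ P} d(v,u)`. -/
noncomputable def distSet (G : SimpleGraph V) (v : V) (P : Set V) : ℕ :=
  sInf ((G.dist v) '' P)

/-- An ordered partition of `V` into `t` (nonempty) classes, encoded by a surjective
map `c : V → Fin t`, is resolving if distinct vertices have distinct partition
representations, i.e. distinct vectors of distances to the classes. -/
def IsResolvingPartition (G : SimpleGraph V) {t : ℕ} (c : V → Fin t) : Prop :=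
  Function.Surjective c ∧
    ∀ u v : V, (∀ i : Fin t, distSet G u {x | c x = i} = distSet G v {x | c x = i}) → u = v

/-- The partition dimension: the least `t` admitting a resolving partition into `t` classes. -/
noncomputable def partitionDim (G : SimpleGraph V) : ℕ :=
  sInf {t : ℕ | ∃ c : V → Fin t, IsResolvingPartition G c}

/-- A set `S` is a resolving set if distinct vertices have distinct vectors of
distances to the elements of `S`. -/
def IsResolvingSet (G : SimpleGraph V) (S : Set V) : Prop :=
  ∀ u v : V, (∀ w ∈ S, G.dist u w = G.dist v w) → u = v

/-- The metric dimension: the least cardinality of a resolving set. -/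
noncomputable def metricDim (G : SimpleGraph V) : ℕ :=
  sInf {k : ℕ | ∃ S : Set V, S.ncard = k ∧ IsResolvingSet G S}

/-- A leaf is a vertex of degree one. -/
def IsLeaf (G : SimpleGraph V) (v : V) : Prop := (G.neighborSet v).ncard = 1

/-- A major vertex is a vertex of degree at least three. -/
def IsMajor (G : SimpleGraph V) (v : V) : Prop := 3 ≤ (G.neighborSet v).ncard

/-- A path graph: a tree in which every vertex has degree at most two. -/
def IsPathGraph (G : SimpleGraph V) : Prop :=
  G.IsTree ∧ ∀ v : V, (G.neighborSet v).ncard ≤ 2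

/-- `u` is a terminal vertex of the major vertex `v` if `u` is a leaf and
`d(u,v) < d(u,w)` for every other major vertex `w`. -/
def IsTerminalOf (G : SimpleGraph V) (u v : V) : Prop :=
  IsLeaf G u ∧ IsMajor G v ∧ ∀ w : V, IsMajor G w → w ≠ v → G.dist u v < G.dist u w

/-- The terminal degree of a vertex: its number of terminal vertices. -/
noncomputable def terminalDegree (G : SimpleGraph V) (v : V) : ℕ :=
  {u | IsTerminalOf G u v}.ncard

/-- An exterior major vertex: a major vertex with positive terminal degree. -/
def IsExteriorMajor (G : SimpleGraph V) (v : V) : Prop :=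
  IsMajor G v ∧ 0 < terminalDegree G v

/-- `n₁(G)`: the number of leaves. -/
noncomputable def numLeaves (G : SimpleGraph V) : ℕ := {v | IsLeaf G v}.ncard

/-- `ex(G)`: the number of exterior major vertices. -/
noncomputable def numExteriorMajor (G : SimpleGraph V) : ℕ := {v | IsExteriorMajor G v}.ncard

/-- A support vertex: a vertex adjacent to a leaf. -/
def IsSupport (G : SimpleGraph V) (v : V) : Prop := ∃ u, G.Adj v u ∧ IsLeaf G u

/-- `ξ(G)`: the number of support vertices. -/
noncomputable def numSupport (G : SimpleGraph V) : ℕ := {v | IsSupport G v}.ncard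

/-- `θ(G)`: the maximum number of leaves adjacent to a single support vertex. -/
noncomputable def maxLeavesAtSupport (G : SimpleGraph V) : ℕ :=
  sSup {n : ℕ | ∃ v, IsSupport G v ∧ n = {u | G.Adj v u ∧ IsLeaf G u}.ncard}


/-! ### Auxiliary lemmas -/

section Aux

variable {G : SimpleGraph V} {P : Set V} {v : V}

lemma distSet_le_dist (G : SimpleGraph V) {u : V} (v : V) (hu : u ∈ P) :
    distSet G v P ≤ G.dist v u :=
  Nat.sInf_le ⟨u, hu, rfl⟩

lemma exists_distSet_eq (G : SimpleGraph V) (v : V) (hP : P.Nonempty) :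
    ∃ u ∈ P, distSet G v P = G.dist v u := by
  obtain ⟨u, hu, h⟩ := Nat.sInf_mem (hP.image (G.dist v))
  exact ⟨u, hu, h.symm⟩

lemma distSet_eq_zero_of_mem (hv : v ∈ P) : distSet G v P = 0 :=
  le_antisymm (by simpa [SimpleGraph.dist_self] using distSet_le_dist G v hv) (Nat.zero_le _)

lemma mem_of_distSet_eq_zero (hG : G.Connected) (hP : P.Nonempty) (h : distSet G v P = 0) :
    v ∈ P := by
  obtain ⟨u, hu, he⟩ := exists_distSet_eq G v hP
  rw [h] at he
  rwa [(hG.dist_eq_zero_iff).mp he.symm]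

lemma one_le_distSet (hG : G.Connected) (hP : P.Nonempty) (hv : v ∉ P) : 1 ≤ distSet G v P := by
  rw [Nat.one_le_iff_ne_zero]
  exact fun h => hv (mem_of_distSet_eq_zero hG hP h)

lemma distSet_adj_le (hG : G.Connected) {a b : V} (hab : G.Adj a b) (hP : P.Nonempty) :
    distSet G a P ≤ distSet G b P + 1 := by
  obtain ⟨u, hu, he⟩ := exists_distSet_eq G b hP
  have h1 : G.dist a b = 1 := SimpleGraph.dist_eq_one_iff_adj.mpr hab
  have h2 := hG.dist_triangle (u := a) (v := b) (w := u)
  have h3 := distSet_le_dist G a hu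
  omega

lemma exists_adj_dist_eq (hG : G.Connected) {u v : V} {k : ℕ} (h : G.dist v u = k + 1) :
    ∃ v', G.Adj v v' ∧ G.dist v' u = k := by
  obtain ⟨p, hp⟩ := hG.exists_walk_length_eq_dist v u
  rw [h] at hp
  cases p with
  | nil => simp at hp
  | cons hadj q =>
    rename_i x
    refine ⟨x, hadj, ?_⟩
    have h1 : G.dist x u ≤ k := by
      have := SimpleGraph.dist_le q
      simp at hp
      omega
    have h2 : G.dist v u ≤ G.dist v x + G.dist x u := hG.dist_triangle
    have h3 : G.dist v x = 1 := SimpleGraph.dist_eq_one_iff_adj.mpr hadj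
    omega

lemma dist_injective_of_leaf [Finite V] (hG : G.Connected)
    (hdeg : ∀ v : V, (G.neighborSet v).ncard ≤ 2) {u : V}
    (hu : (G.neighborSet u).ncard = 1) :
    ∀ v w : V, G.dist v u = G.dist w u → v = w := by
  suffices H : ∀ k : ℕ, ∀ v w : V, G.dist v u = k → G.dist w u = k → v = w by
    intro v w h; exact H _ v w h rfl
  intro k
  induction k using Nat.strong_induction_on with
  | _ k IH =>
    intro v w hv hw
    match k with
    | 0 => rw [hG.dist_eq_zero_iff.mp hv, hG.dist_eq_zero_iff.mp hw]
    | k + 1 =>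
      by_contra hne
      obtain ⟨v', hv', hdv⟩ := exists_adj_dist_eq hG hv
      obtain ⟨w', hw', hdw⟩ := exists_adj_dist_eq hG hw
      have hvw : v' = w' := IH k (by omega) _ _ hdv hdw
      subst hvw
      match k with
      | 0 =>
        have hv'u : v' = u := hG.dist_eq_zero_iff.mp hdv
        subst hv'u
        obtain ⟨a, ha⟩ := Set.ncard_eq_one.mp hu
        have h1 : v ∈ G.neighborSet v' := hv'.symm
        have h2 : w ∈ G.neighborSet v' := hw'.symm
        rw [ha] at h1 h2
        exact hne (h1.trans h2.symm)
      | k + 1 =>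
        obtain ⟨v'', hv'', hdv''⟩ := exists_adj_dist_eq hG hdv
        have hsub : {v, w, v''} ⊆ G.neighborSet v' := by
          intro x hx
          rcases hx with rfl | rfl | rfl
          · exact hv'.symm
          · exact hw'.symm
          · exact hv''
        have hvne : v ≠ v'' := by rintro rfl; omega
        have hwne : w ≠ v'' := by rintro rfl; omega
        have h3 : ({v, w, v''} : Set V).ncard = 3 := by
          rw [Set.ncard_insert_of_notMem (by simp [hne, hvne]),
            Set.ncard_insert_of_notMem (by simp [hwne]), Set.ncard_singleton]
        have h4 := Set.ncard_le_ncard hsub (G.neighborSet v').toFinite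
        have := hdeg v'
        omega

lemma fin_two_cases : ∀ i : Fin 2, i = 0 ∨ i = 1 := by decide

lemma exists_leaf [Fintype V] (hG : G.Connected) (hV : 2 ≤ Fintype.card V) (hT : G.IsTree)
    (hdeg : ∀ v : V, (G.neighborSet v).ncard ≤ 2) :
    ∃ u : V, (G.neighborSet u).ncard = 1 := by
  classical
  have hdegree : ∀ v : V, (G.neighborSet v).ncard = G.degree v := fun v => by
    rw [SimpleGraph.degree, SimpleGraph.neighborFinset]
    exact Set.ncard_eq_toFinset_card' _
  have hmin : ∀ v : V, 1 ≤ G.degree v := by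
    intro v
    obtain ⟨w, hw⟩ := Fintype.exists_ne_of_one_lt_card (by omega) v
    obtain ⟨p⟩ := hG.preconnected v w
    cases p with
    | nil => exact absurd rfl hw
    | cons hadj q => exact G.degree_pos_iff_exists_adj v |>.mpr ⟨_, hadj⟩
  by_contra h
  push_neg at h
  have h2 : ∀ v : V, 2 ≤ G.degree v := by
    intro v
    have := h v
    have := hmin v
    have := hdegree v
    have := hdeg v
    omega
  have hsum := G.sum_degrees_eq_twice_card_edges
  have hcard := hT.card_edgeFinset
  have hle := Finset.card_nsmul_le_sum (Finset.univ : Finset V) (fun v : V => G.degree v) 2 (fun v _ => h2 v)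
  rw [Finset.card_univ, smul_eq_mul] at hle
  omega

lemma exists_resolving_two [Fintype V] {G : SimpleGraph V} (hG : G.Connected)
    (hV : 2 ≤ Fintype.card V) (hpath : IsPathGraph G) :
    ∃ c : V → Fin 2, IsResolvingPartition G c := by
  classical
  obtain ⟨hT, hdeg⟩ := hpath
  obtain ⟨u, hu⟩ := exists_leaf hG hV hT hdeg
  refine ⟨fun v => if v = u then 0 else 1, ?_, ?_⟩
  · intro i
    rcases fin_two_cases i with rfl | rfl
    · exact ⟨u, if_pos rfl⟩
    · obtain ⟨w, hw⟩ := Fintype.exists_ne_of_one_lt_card (by omega) u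
      exact ⟨w, if_neg hw⟩
  · intro a b h
    have h0 := h 0
    have hset : {x : V | (if x = u then (0 : Fin 2) else 1) = 0} = {u} := by
      ext x
      by_cases hx : x = u <;> simp [hx]
    rw [hset] at h0
    have ha : distSet G a ({u} : Set V) = G.dist a u := by
      unfold distSet
      rw [Set.image_singleton, csInf_singleton]
    have hb : distSet G b ({u} : Set V) = G.dist b u := by
      unfold distSet
      rw [Set.image_singleton, csInf_singleton]
    exact dist_injective_of_leaf hG hdeg hu a b (by rw [← ha, ← hb, h0])

lemma cycle_two_neighbors {G : SimpleGraph V} {m : V} {q : G.Walk m m} (hq : q.IsCycle) :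
    ∃ x y : V, x ≠ y ∧ G.Adj m x ∧ G.Adj m y ∧ x ∈ q.support ∧ y ∈ q.support := by
  cases q with
  | nil => exact absurd hq SimpleGraph.Walk.IsCycle.not_of_nil
  | cons hadj q' =>
    rename_i b
    rw [SimpleGraph.Walk.cons_isCycle_iff] at hq
    obtain ⟨hq', hedge⟩ := hq
    have hbm : b ≠ m := hadj.ne'
    have hnil : ¬ q'.reverse.Nil := SimpleGraph.Walk.not_nil_of_ne (fun h => hbm h.symm)
    obtain ⟨y, hy⟩ : ∃ y, q'.reverse.getVert 1 = y := ⟨_, rfl⟩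
    have hadjy : G.Adj m y := hy ▸ SimpleGraph.Walk.adj_snd hnil
    have h2 := SimpleGraph.Walk.cons_tail_eq q'.reverse hnil
    have hyedge : s(m, y) ∈ q'.reverse.edges := by
      rw [← h2, SimpleGraph.Walk.edges_cons, ← hy]
      exact List.mem_cons_self
    have hyq' : s(m, y) ∈ q'.edges := by
      rwa [SimpleGraph.Walk.edges_reverse, List.mem_reverse] at hyedge
    have hxy : b ≠ y := by
      intro h
      rw [← h] at hyq'
      exact hedge hyq'
    refine ⟨b, y, hxy, hadj, hadjy, ?_, ?_⟩
    · rw [SimpleGraph.Walk.support_cons]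
      exact List.mem_cons_of_mem _ (SimpleGraph.Walk.start_mem_support q')
    · have hmem : y ∈ q'.reverse.support := by
        rw [SimpleGraph.Walk.mem_support_iff_exists_getVert]
        refine ⟨1, hy, ?_⟩
        have := SimpleGraph.Walk.not_nil_iff_lt_length.mp hnil
        omega
      rw [SimpleGraph.Walk.support_reverse, List.mem_reverse] at hmem
      rw [SimpleGraph.Walk.support_cons]
      exact List.mem_cons_of_mem _ hmem

lemma isPathGraph_of_resolving [Fintype V] {G : SimpleGraph V} (hG : G.Connected)
    (c : V → Fin 2) (hc : IsResolvingPartition G c) : IsPathGraph G := by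
  classical
  have hA : ({x : V | c x = 0}).Nonempty := by
    obtain ⟨v, hv⟩ := hc.1 0; exact ⟨v, hv⟩
  have hB : ({x : V | c x = 1}).Nonempty := by
    obtain ⟨v, hv⟩ := hc.1 1; exact ⟨v, hv⟩
  have hres : ∀ a b : V, distSet G a {x | c x = 0} = distSet G b {x | c x = 0} →
      distSet G a {x | c x = 1} = distSet G b {x | c x = 1} → a = b := by
    intro a b h0 h1
    apply hc.2
    intro i
    rcases fin_two_cases i with rfl | rfl
    · exact h0
    · exact h1
  set f : V → ℤ := fun v =>
    if c v = 0 then (distSet G v {x | c x = 1} : ℤ) else 1 - (distSet G v {x | c x = 0} : ℤ)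
    with hfdef
  have hfa : ∀ v : V, c v = 0 → f v = (distSet G v {x | c x = 1} : ℤ) := by
    intro v hv; rw [hfdef]; simp only [if_pos hv]
  have hfb : ∀ v : V, c v = 1 → f v = 1 - (distSet G v {x | c x = 0} : ℤ) := by
    intro v hv; rw [hfdef]
    simp only [hv]
    norm_num
  have hposa : ∀ v : V, c v = 0 → 1 ≤ distSet G v {x | c x = 1} := by
    intro v hv
    refine one_le_distSet hG hB ?_
    simp only [Set.mem_setOf_eq, hv]
    decide
  have hposb : ∀ v : V, c v = 1 → 1 ≤ distSet G v {x | c x = 0} := by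
    intro v hv
    refine one_le_distSet hG hA ?_
    simp only [Set.mem_setOf_eq, hv]
    decide
  have hinj : Function.Injective f := by
    intro a b hab
    rcases fin_two_cases (c a) with ha | ha <;> rcases fin_two_cases (c b) with hb | hb
    · rw [hfa a ha, hfa b hb] at hab
      have h1 : distSet G a {x | c x = 1} = distSet G b {x | c x = 1} := by exact_mod_cast hab
      refine hres a b ?_ h1
      rw [distSet_eq_zero_of_mem (show a ∈ {x : V | c x = 0} from ha),
        distSet_eq_zero_of_mem (show b ∈ {x : V | c x = 0} from hb)]
    · exfalso
      rw [hfa a ha, hfb b hb] at hab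
      have := hposa a ha
      have := hposb b hb
      omega
    · exfalso
      rw [hfb a ha, hfa b hb] at hab
      have := hposb a ha
      have := hposa b hb
      omega
    · rw [hfb a ha, hfb b hb] at hab
      have h0 : distSet G a {x | c x = 0} = distSet G b {x | c x = 0} := by omega
      refine hres a b h0 ?_
      rw [distSet_eq_zero_of_mem (show a ∈ {x : V | c x = 1} from ha),
        distSet_eq_zero_of_mem (show b ∈ {x : V | c x = 1} from hb)]
  have hstep : ∀ a b : V, G.Adj a b → f b = f a - 1 ∨ f b = f a + 1 := by
    intro a b hab
    have hne : f a ≠ f b := fun h => hab.ne (hinj h)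
    rcases fin_two_cases (c a) with ha | ha <;> rcases fin_two_cases (c b) with hb | hb
    · have l1 := distSet_adj_le (P := {x | c x = 1}) hG hab hB
      have l2 := distSet_adj_le (P := {x | c x = 1}) hG hab.symm hB
      rw [hfa a ha, hfa b hb] at *
      omega
    · have e1 : distSet G a {x | c x = 1} = 1 := by
        have h1 := distSet_le_dist (P := {x | c x = 1}) G a (show b ∈ _ from hb)
        rw [SimpleGraph.dist_eq_one_iff_adj.mpr hab] at h1
        have := hposa a ha
        omega
      have e2 : distSet G b {x | c x = 0} = 1 := by
        have h1 := distSet_le_dist (P := {x | c x = 0}) G b (show a ∈ _ from ha)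
        rw [SimpleGraph.dist_eq_one_iff_adj.mpr hab.symm] at h1
        have := hposb b hb
        omega
      rw [hfa a ha, hfb b hb, e1, e2]
      left; norm_num
    · have e1 : distSet G a {x | c x = 0} = 1 := by
        have h1 := distSet_le_dist (P := {x | c x = 0}) G a (show b ∈ _ from hb)
        rw [SimpleGraph.dist_eq_one_iff_adj.mpr hab] at h1
        have := hposb a ha
        omega
      have e2 : distSet G b {x | c x = 1} = 1 := by
        have h1 := distSet_le_dist (P := {x | c x = 1}) G b (show a ∈ _ from ha)
        rw [SimpleGraph.dist_eq_one_iff_adj.mpr hab.symm] at h1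
        have := hposa b hb
        omega
      rw [hfb a ha, hfa b hb, e1, e2]
      right; norm_num
    · have l1 := distSet_adj_le (P := {x | c x = 0}) hG hab hA
      have l2 := distSet_adj_le (P := {x | c x = 0}) hG hab.symm hA
      rw [hfb a ha, hfb b hb] at *
      omega
  have hdeg : ∀ v : V, (G.neighborSet v).ncard ≤ 2 := by
    intro v
    calc (G.neighborSet v).ncard = (f '' G.neighborSet v).ncard :=
          (Set.ncard_image_of_injective _ hinj).symm
      _ ≤ ({f v - 1, f v + 1} : Set ℤ).ncard := by
          refine Set.ncard_le_ncard ?_ (Set.toFinite _)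
          rintro _ ⟨w, hw, rfl⟩
          rcases hstep v w hw with h | h <;> simp [h]
      _ ≤ 2 := le_trans (Set.ncard_insert_le _ _) (by simp)
  refine ⟨⟨hG, ?_⟩, hdeg⟩
  intro a p hp
  have hsupne : p.support.toFinset.Nonempty :=
    ⟨a, List.mem_toFinset.mpr (SimpleGraph.Walk.start_mem_support p)⟩
  obtain ⟨m, hm, hmax⟩ := Finset.exists_max_image p.support.toFinset f hsupne
  rw [List.mem_toFinset] at hm
  have hqc : (p.rotate m hm).IsCycle := hp.rotate hm
  have hqsup : ∀ x ∈ (p.rotate m hm).support, f x ≤ f m := by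
    intro x hx
    apply hmax
    rw [List.mem_toFinset]
    rw [SimpleGraph.Walk.support_eq_cons (p.rotate m hm)] at hx
    rcases List.mem_cons.mp hx with rfl | hx'
    · exact hm
    · have := (SimpleGraph.Walk.support_rotate p m hm).mem_iff.mp hx'
      exact List.mem_of_mem_tail this
  obtain ⟨x, y, hxy, hax, hay, hxs, hys⟩ := cycle_two_neighbors hqc
  have h1 := hqsup x hxs
  have h2 := hqsup y hys
  have hfx : f x = f m - 1 := by rcases hstep m x hax with h | h <;> omega
  have hfy : f y = f m - 1 := by rcases hstep m y hay with h | h <;> omega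
  exact hxy (hinj (hfx.trans hfy.symm))

lemma two_le_of_resolving [Fintype V] {G : SimpleGraph V} (hG : G.Connected)
    (hV : 2 ≤ Fintype.card V) {t : ℕ} (c : V → Fin t) (hc : IsResolvingPartition G c) :
    2 ≤ t := by
  match t with
  | 0 =>
    obtain ⟨v⟩ := hG.nonempty
    exact (c v).elim0
  | 1 =>
    exfalso
    obtain ⟨a, b, hab⟩ := Fintype.exists_pair_of_one_lt_card (α := V) (by omega)
    apply hab
    apply hc.2
    intro i
    have hset : {x : V | c x = i} = Set.univ := by
      ext x
      simp [Subsingleton.elim (c x) i]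
    rw [hset, distSet_eq_zero_of_mem (Set.mem_univ a), distSet_eq_zero_of_mem (Set.mem_univ b)]
  | n + 2 => omega

end Aux

/-- A connected graph with at least two vertices has partition dimension two
iff it is a path graph. -/
theorem partitionDim_eq_two_iff_isPathGraph {V : Type*} [Fintype V] (G : SimpleGraph V)
    (hG : G.Connected) (hV : 2 ≤ Fintype.card V) :
    partitionDim G = 2 ↔ IsPathGraph G := by
  constructor
  · intro hpd
    have hne : {t : ℕ | ∃ c : V → Fin t, IsResolvingPartition G c}.Nonempty := by
      by_contra h
      rw [Set.not_nonempty_iff_eq_empty] at h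
      unfold partitionDim at hpd
      rw [h] at hpd
      simp [Nat.sInf_empty] at hpd
    have hmem := Nat.sInf_mem hne
    unfold partitionDim at hpd
    rw [hpd] at hmem
    obtain ⟨c, hcr⟩ := hmem
    exact isPathGraph_of_resolving hG c hcr
  · intro hpath
    obtain ⟨cc, hcc⟩ := exists_resolving_two hG hV hpath
    have h2 : 2 ∈ {t : ℕ | ∃ c : V → Fin t, IsResolvingPartition G c} := ⟨cc, hcc⟩
    refine le_antisymm (Nat.sInf_le h2) ?_
    refine le_csInf ⟨2, h2⟩ ?_
    rintro t ⟨c, hct⟩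
    exact two_le_of_resolving hG hV c hct
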